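/- For 0 < a < b, ∫_0^1 (1−t)·|1−2t|/(tb+(1−t)a)² dt = 1/(a(b−a)) − ((3b+a)/(b−a)³) ln((a+b)²/(4ab)). -/

import Mathlib

open Real Set intervalIntegral

def HarmonicallyConvexOn (I : Set ℝ) (f : ℝ → ℝ) : Prop :=
  ∀ x ∈ I, ∀ y ∈ I, ∀ t ∈ Set.Icc (0:ℝ) 1,
    f (x * y / (t * x + (1 - t) * y)) ≤ t * f y + (1 - t) * f x

lemma derivF (a b t : ℝ) (ha : 0 < a) (hab : a < b) (ht : 0 < a + (b - a) * t) :
    HasDerivAt (fun t : ℝ => 2 / (b - a) ^ 2 * t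
        - (3 * b + a) / (b - a) ^ 3 * Real.log (a + (b - a) * t)
        - (a + b) * b / (b - a) ^ 3 * (a + (b - a) * t)⁻¹)
      ((2 * t ^ 2 - 3 * t + 1) / (a + (b - a) * t) ^ 2) t := by
  have hc : (0:ℝ) < b - a := by linarith
  have h1 : HasDerivAt (fun t : ℝ => a + (b - a) * t) (b - a) t := by
    simpa using ((hasDerivAt_id t).const_mul (b - a)).const_add a
  have h2 : HasDerivAt (fun t : ℝ => Real.log (a + (b - a) * t))
      ((b - a) / (a + (b - a) * t)) t := by
    simpa using h1.log ht.ne'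
  have h3 : HasDerivAt (fun t : ℝ => (a + (b - a) * t)⁻¹)
      (-(b - a) / (a + (b - a) * t) ^ 2) t := by
    exact h1.inv ht.ne'
  have H := (((hasDerivAt_id t).const_mul (2 / (b - a) ^ 2)).sub
      (h2.const_mul ((3 * b + a) / (b - a) ^ 3))).sub
      (h3.const_mul ((a + b) * b / (b - a) ^ 3))
  refine H.congr_deriv ?_
  field_simp
  ring

theorem stmt11 (a b : ℝ) (ha : 0 < a) (hab : a < b) :
    ∫ t in (0:ℝ)..1, (1 - t) * |1 - 2 * t| / (t * b + (1 - t) * a) ^ 2 =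
      1 / (a * (b - a)) - (3 * b + a) / (b - a) ^ 3 * Real.log ((a + b) ^ 2 / (4 * a * b)) := by
  have hc : (0:ℝ) < b - a := by linarith
  set F : ℝ → ℝ := fun t => 2 / (b - a) ^ 2 * t
      - (3 * b + a) / (b - a) ^ 3 * Real.log (a + (b - a) * t)
      - (a + b) * b / (b - a) ^ 3 * (a + (b - a) * t)⁻¹ with hF
  have hpos : ∀ t ∈ Icc (0:ℝ) 1, 0 < a + (b - a) * t := by
    intro t ht
    nlinarith [ht.1, ht.2]
  -- piece 1: [0, 1/2]
  have h1 : ∫ t in (0:ℝ)..(1/2), (1 - t) * |1 - 2 * t| / (t * b + (1 - t) * a) ^ 2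
      = F (1/2) - F 0 := by
    have heq : ∀ t ∈ Set.uIcc (0:ℝ) (1/2),
        (1 - t) * |1 - 2 * t| / (t * b + (1 - t) * a) ^ 2
          = (2 * t ^ 2 - 3 * t + 1) / (a + (b - a) * t) ^ 2 := by
      intro t ht
      rw [Set.uIcc_of_le (by norm_num)] at ht
      rw [abs_of_nonneg (by linarith [ht.2])]
      ring_nf
    rw [intervalIntegral.integral_congr heq]
    apply intervalIntegral.integral_eq_sub_of_hasDerivAt
    · intro t ht
      rw [Set.uIcc_of_le (by norm_num)] at ht
      exact derivF a b t ha hab (hpos t ⟨ht.1, by linarith [ht.2]⟩)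
    · apply ContinuousOn.intervalIntegrable
      apply ContinuousOn.div (by fun_prop) (by fun_prop)
      intro t ht
      rw [Set.uIcc_of_le (by norm_num)] at ht
      exact (pow_pos (hpos t ⟨ht.1, by linarith [ht.2]⟩) 2).ne'
  -- piece 2: [1/2, 1]
  have h2 : ∫ t in (1/2:ℝ)..1, (1 - t) * |1 - 2 * t| / (t * b + (1 - t) * a) ^ 2
      = F (1/2) - F 1 := by
    have heq : ∀ t ∈ Set.uIcc (1/2:ℝ) 1,
        (1 - t) * |1 - 2 * t| / (t * b + (1 - t) * a) ^ 2
          = -((2 * t ^ 2 - 3 * t + 1) / (a + (b - a) * t) ^ 2) := by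
      intro t ht
      rw [Set.uIcc_of_le (by norm_num)] at ht
      rw [abs_of_nonpos (by linarith [ht.1])]
      ring_nf
    rw [intervalIntegral.integral_congr heq, intervalIntegral.integral_neg,
      intervalIntegral.integral_eq_sub_of_hasDerivAt
        (f := F) (f' := fun t => (2 * t ^ 2 - 3 * t + 1) / (a + (b - a) * t) ^ 2)
        (fun t ht => by
          rw [Set.uIcc_of_le (by norm_num)] at ht
          exact derivF a b t ha hab (hpos t ⟨by linarith [ht.1], ht.2⟩))
        (by
          apply ContinuousOn.intervalIntegrable
          apply ContinuousOn.div (by fun_prop) (by fun_prop)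
          intro t ht
          rw [Set.uIcc_of_le (by norm_num)] at ht
          exact (pow_pos (hpos t ⟨by linarith [ht.1], ht.2⟩) 2).ne')]
    ring
  have hsplit := intervalIntegral.integral_add_adjacent_intervals
    (a := (0:ℝ)) (b := 1/2) (c := 1) (μ := MeasureTheory.volume)
    (f := fun t => (1 - t) * |1 - 2 * t| / (t * b + (1 - t) * a) ^ 2)
    (by
      apply ContinuousOn.intervalIntegrable
      apply ContinuousOn.div (by fun_prop) (by fun_prop)
      intro t ht
      rw [Set.uIcc_of_le (by norm_num)] at ht
      have h := hpos t ⟨ht.1, by linarith [ht.2]⟩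
      have e : t * b + (1 - t) * a = a + (b - a) * t := by ring
      rw [e]
      exact (pow_pos h 2).ne')
    (by
      apply ContinuousOn.intervalIntegrable
      apply ContinuousOn.div (by fun_prop) (by fun_prop)
      intro t ht
      rw [Set.uIcc_of_le (by norm_num)] at ht
      have h := hpos t ⟨by linarith [ht.1], ht.2⟩
      have e : t * b + (1 - t) * a = a + (b - a) * t := by ring
      rw [e]
      exact (pow_pos h 2).ne')
  rw [← hsplit, h1, h2]
  -- now pure algebra with logs
  have e0 : a + (b - a) * 0 = a := by ring
  have eh : a + (b - a) * (1/2) = (a + b) / 2 := by ring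
  have e1 : a + (b - a) * 1 = b := by ring
  rw [hF]
  simp only [e0, eh, e1]
  have hab2 : (0:ℝ) < a + b := by linarith
  have hb : (0:ℝ) < b := by linarith
  have hlog1 : Real.log ((a + b) / 2) = Real.log (a + b) - Real.log 2 :=
    Real.log_div hab2.ne' (by norm_num)
  have hlog2 : Real.log ((a + b) ^ 2 / (4 * a * b))
      = 2 * Real.log (a + b) - (2 * Real.log 2 + Real.log a + Real.log b) := by
    rw [Real.log_div (by positivity) (by positivity), Real.log_pow,
      Real.log_mul (by positivity) hb.ne', Real.log_mul (by positivity) ha.ne',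
      show (4:ℝ) = 2 ^ 2 by norm_num, Real.log_pow]
    push_cast
    ring
  rw [hlog1, hlog2]
  field_simp
  ring
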